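/- Let a, b, c, d be integers such that √b and √d are not integers (i.e. b and d are not perfect squares). Then (a + √b)/(c + √d) is an algebraic integer if and only if (a − √b)/(c − √d) is an algebraic integer. -/

import Mathlib

set_option maxHeartbeats 1000000

open Polynomial IntermediateField

/-- The minimal polynomial over `ℚ` of a complex square root of an integer `n`
which is not an integer is `X ^ 2 - n`. -/
private lemma minpoly_sqrt (n : ℤ) (α : ℂ) (hsq : α ^ 2 = (n : ℂ))
    (hn : ∀ m : ℤ, α ≠ (m : ℂ)) :
    minpoly ℚ α = X ^ 2 - C (n : ℚ) := by
  have hirr : Irreducible (X ^ 2 - C (n : ℚ)) := by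
    apply X_pow_sub_C_irreducible_of_prime Nat.prime_two
    intro r hr
    have hint : IsIntegral ℤ r := by
      refine ⟨X ^ 2 - C n, monic_X_pow_sub_C n two_ne_zero, ?_⟩
      rw [eval₂_sub, eval₂_pow, eval₂_X, eval₂_C]
      rw [hr]
      simp
    obtain ⟨m, hm⟩ := IsIntegrallyClosed.isIntegral_iff.mp hint
    rw [← hm] at hr
    have hmC : ((m : ℤ) : ℂ) ^ 2 = (n : ℂ) := by
      have := congrArg (fun q : ℚ => (q : ℂ)) hr
      push_cast at this ⊢
      exact this
    have hzero : (α - (m : ℂ)) * (α + (m : ℂ)) = 0 := by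
      linear_combination hsq - hmC
    rcases mul_eq_zero.mp hzero with h | h
    · exact hn m (by linear_combination h)
    · refine hn (-m) ?_
      push_cast
      linear_combination h
  refine (minpoly.eq_of_irreducible_of_monic hirr ?_
    (monic_X_pow_sub_C _ two_ne_zero)).symm
  rw [map_sub, map_pow, aeval_X, aeval_C]
  rw [show (algebraMap ℚ ℂ) ((n : ℚ)) = (n : ℂ) by push_cast; rfl, hsq, sub_self]

private lemma aeval_neg_sqrt (n : ℤ) (α : ℂ) (hsq : α ^ 2 = (n : ℂ))
    (hn : ∀ m : ℤ, α ≠ (m : ℂ)) :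
    aeval (-α) (minpoly ℚ α) = 0 := by
  rw [minpoly_sqrt n α hsq hn, map_sub, map_pow, aeval_X, aeval_C, neg_sq]
  rw [show (algebraMap ℚ ℂ) ((n : ℚ)) = (n : ℂ) by push_cast; rfl, hsq, sub_self]

private lemma isIntegral_sqrt (n : ℤ) (α : ℂ) (hsq : α ^ 2 = (n : ℂ)) :
    IsIntegral ℚ α := by
  refine ⟨X ^ 2 - C (n : ℚ), monic_X_pow_sub_C _ two_ne_zero, ?_⟩
  rw [eval₂_sub, eval₂_pow, eval₂_X, eval₂_C]
  rw [show (algebraMap ℚ ℂ) ((n : ℚ)) = (n : ℂ) by push_cast; rfl, hsq, sub_self]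

/-- There is a `ℚ`-algebra homomorphism on `ℚ(sqb, sqd)` negating both `sqb` and `sqd`. -/
private lemma exists_conj_hom (b d : ℤ) (sqb sqd : ℂ)
    (hsqb : sqb ^ 2 = (b : ℂ)) (hsqd : sqd ^ 2 = (d : ℂ))
    (hb : ∀ m : ℤ, sqb ≠ (m : ℂ)) (hd : ∀ m : ℤ, sqd ≠ (m : ℂ)) :
    ∃ (K : IntermediateField ℚ ℂ) (hbK : sqb ∈ K) (hdK : sqd ∈ K)
      (φ : K →ₐ[ℚ] ℂ), φ ⟨sqb, hbK⟩ = -sqb ∧ φ ⟨sqd, hdK⟩ = -sqd := by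
  set S : Set ℂ := {sqb, sqd} with hS
  have hK : ∀ s ∈ S, IsIntegral ℚ s ∧ ((minpoly ℚ s).map (algebraMap ℚ ℂ)).Splits := by
    rintro s (rfl | rfl)
    · exact ⟨isIntegral_sqrt b _ hsqb, IsAlgClosed.splits _⟩
    · exact ⟨isIntegral_sqrt d _ hsqd, IsAlgClosed.splits _⟩
  have hbK : sqb ∈ adjoin ℚ S := subset_adjoin ℚ S (Or.inl rfl)
  have hdK : sqd ∈ adjoin ℚ S := subset_adjoin ℚ S (Or.inr rfl)
  obtain ⟨φb, hφb⟩ := exists_algHom_adjoin_of_splits_of_aeval hK hbK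
    (aeval_neg_sqrt b sqb hsqb hb)
  obtain ⟨φd, hφd⟩ := exists_algHom_adjoin_of_splits_of_aeval hK hdK
    (aeval_neg_sqrt d sqd hsqd hd)
  -- every `ℚ`-algebra hom sends `sqb` to `± sqb` and `sqd` to `± sqd`
  have key : ∀ (φ : adjoin ℚ S →ₐ[ℚ] ℂ) (n : ℤ) (α : ℂ) (hαK : α ∈ adjoin ℚ S),
      α ^ 2 = (n : ℂ) → φ ⟨α, hαK⟩ = α ∨ φ ⟨α, hαK⟩ = -α := by
    intro φ n α hαK hα
    have h1 : (⟨α, hαK⟩ : adjoin ℚ S) ^ 2 = (n : adjoin ℚ S) := by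
      ext
      push_cast
      exact hα
    have h2 : φ ⟨α, hαK⟩ ^ 2 = (n : ℂ) := by
      rw [← map_pow, h1, map_intCast]
    have hzero : (φ ⟨α, hαK⟩ - α) * (φ ⟨α, hαK⟩ + α) = 0 := by
      linear_combination h2 - hα
    rcases mul_eq_zero.mp hzero with h | h
    · exact Or.inl (by linear_combination h)
    · exact Or.inr (by linear_combination h)
  -- the range of every `ℚ`-algebra hom is contained in `K`
  have hrange : ∀ φ : adjoin ℚ S →ₐ[ℚ] ℂ, ∀ z : adjoin ℚ S,
      φ z ∈ adjoin ℚ S := by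
    intro φ z
    obtain ⟨w, hw⟩ := z
    refine adjoin_induction (F := ℚ) (E := ℂ) (s := S)
      (p := fun w hw => φ ⟨w, hw⟩ ∈ adjoin ℚ S)
      ?_ ?_ ?_ ?_ ?_ hw
    · intro x hx
      have hmem : x ∈ adjoin ℚ S := subset_adjoin ℚ S hx
      show φ ⟨x, hmem⟩ ∈ adjoin ℚ S
      rcases hx with rfl | rfl
      · rcases key φ b x hmem hsqb with h | h <;> rw [h]
        · exact hmem
        · exact neg_mem hmem
      · rcases key φ d x hmem hsqd with h | h <;> rw [h]
        · exact hmem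
        · exact neg_mem hmem
    · intro q
      have : (⟨algebraMap ℚ ℂ q, IntermediateField.algebraMap_mem _ q⟩ : adjoin ℚ S)
          = algebraMap ℚ (adjoin ℚ S) q := rfl
      rw [this, AlgHom.commutes]
      exact IntermediateField.algebraMap_mem _ q
    · intro x y hx hy hpx hpy
      have : (⟨x + y, add_mem hx hy⟩ : adjoin ℚ S) = ⟨x, hx⟩ + ⟨y, hy⟩ := rfl
      rw [this, map_add]
      exact add_mem hpx hpy
    · intro x hx hpx
      have : (⟨x⁻¹, inv_mem hx⟩ : adjoin ℚ S) = (⟨x, hx⟩ : adjoin ℚ S)⁻¹ := rfl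
      rw [this, map_inv₀]
      exact inv_mem hpx
    · intro x y hx hy hpx hpy
      have : (⟨x * y, mul_mem hx hy⟩ : adjoin ℚ S) = ⟨x, hx⟩ * ⟨y, hy⟩ := rfl
      rw [this, map_mul]
      exact mul_mem hpx hpy
  rcases key φb d sqd hdK hsqd with h1 | h1
  case inr =>
    -- `φb` already negates both
    exact ⟨adjoin ℚ S, hbK, hdK, φb, hφb, h1⟩
  rcases key φd b sqb hbK hsqb with h2 | h2
  case inr =>
    exact ⟨adjoin ℚ S, hbK, hdK, φd, h2, hφd⟩
  -- now compose: `φb ∘ φd` negates both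
  set ψd : adjoin ℚ S →ₐ[ℚ] adjoin ℚ S :=
    (φd.codRestrict (adjoin ℚ S).toSubalgebra (fun z => (mem_toSubalgebra _ _).mpr (hrange φd z))) with hψd
  have hval : ∀ z : adjoin ℚ S, (ψd z : ℂ) = φd z := fun z => rfl
  refine ⟨adjoin ℚ S, hbK, hdK, φb.comp ψd, ?_, ?_⟩
  · have : ψd ⟨sqb, hbK⟩ = ⟨sqb, hbK⟩ := by
      ext
      rw [hval]
      exact h2
    change φb (ψd ⟨sqb, hbK⟩) = -sqb
    rw [this, hφb]
  · have : ψd ⟨sqd, hdK⟩ = -⟨sqd, hdK⟩ := by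
      ext
      rw [hval, hφd]
      rfl
    change φb (ψd ⟨sqd, hdK⟩) = -sqd
    rw [this, map_neg]
    exact congrArg Neg.neg h1

/-- Forward direction. -/
private lemma forward (a b c d : ℤ) (sqb sqd : ℂ)
    (hsqb : sqb ^ 2 = (b : ℂ)) (hsqd : sqd ^ 2 = (d : ℂ))
    (hb : ∀ m : ℤ, sqb ≠ (m : ℂ)) (hd : ∀ m : ℤ, sqd ≠ (m : ℂ))
    (h₁ : (c : ℂ) + sqd ≠ 0) (h₂ : (c : ℂ) - sqd ≠ 0)
    (hx : IsIntegral ℤ (((a : ℂ) + sqb) / ((c : ℂ) + sqd))) :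
    IsIntegral ℤ (((a : ℂ) - sqb) / ((c : ℂ) - sqd)) := by
  obtain ⟨K, hbK, hdK, φ, hφb, hφd⟩ := exists_conj_hom b d sqb sqd hsqb hsqd hb hd
  have hxK : ((a : ℂ) + sqb) / ((c : ℂ) + sqd) ∈ K :=
    div_mem (add_mem (intCast_mem K a) hbK) (add_mem (intCast_mem K c) hdK)
  have hx' : IsIntegral ℤ (⟨_, hxK⟩ : K) := by
    rwa [← isIntegral_algebraMap_iff (B := ℂ)
      (Subtype.val_injective : Function.Injective (algebraMap K ℂ))]
  have hy' : IsIntegral ℤ (φ ⟨_, hxK⟩) := hx'.map (φ.restrictScalars ℤ)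
  have heq : φ ⟨_, hxK⟩ = ((a : ℂ) - sqb) / ((c : ℂ) - sqd) := by
    have hx'eq : (⟨_, hxK⟩ : K)
        = ((a : K) + ⟨sqb, hbK⟩) / ((c : K) + ⟨sqd, hdK⟩) := by
      ext
      push_cast
      rfl
    rw [hx'eq, map_div₀, map_add, map_add, map_intCast, map_intCast, hφb, hφd]
    ring
  rwa [heq] at hy'

/-- Lemma 4.4.  Let `a, b, c, d` be integers such that `√b` and `√d`
are not integers.  Then `(a + √b)/(c + √d)` is an algebraic integer if and only if
`(a - √b)/(c - √d)` is an algebraic integer.  Here `sqb` and `sqd` denote fixed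
(complex) square roots of `b` and `d`, and both denominators are assumed nonzero. -/
theorem algebraic_integer_conjugate_iff (a b c d : ℤ) (sqb sqd : ℂ)
    (hsqb : sqb ^ 2 = (b : ℂ)) (hsqd : sqd ^ 2 = (d : ℂ))
    -- `√b` and `√d` are not integers
    (hb : ∀ m : ℤ, sqb ≠ (m : ℂ)) (hd : ∀ m : ℤ, sqd ≠ (m : ℂ))
    (h₁ : (c : ℂ) + sqd ≠ 0) (h₂ : (c : ℂ) - sqd ≠ 0) :
    IsIntegral ℤ (((a : ℂ) + sqb) / ((c : ℂ) + sqd)) ↔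
      IsIntegral ℤ (((a : ℂ) - sqb) / ((c : ℂ) - sqd)) := by
  constructor
  · exact forward a b c d sqb sqd hsqb hsqd hb hd h₁ h₂
  · intro h
    have hb' : ∀ m : ℤ, -sqb ≠ (m : ℂ) := by
      intro m hm
      refine hb (-m) ?_
      push_cast
      linear_combination -hm
    have hd' : ∀ m : ℤ, -sqd ≠ (m : ℂ) := by
      intro m hm
      refine hd (-m) ?_
      push_cast
      linear_combination -hm
    have h₁' : (c : ℂ) + -sqd ≠ 0 := by
      rwa [← sub_eq_add_neg]
    have h₂' : (c : ℂ) - -sqd ≠ 0 := by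
      rwa [sub_neg_eq_add]
    have := forward a b c d (-sqb) (-sqd) (by rw [neg_pow]; simp [hsqb])
      (by rw [neg_pow]; simp [hsqd]) hb' hd' h₁' h₂'
      (by rwa [← sub_eq_add_neg, ← sub_eq_add_neg])
    rwa [sub_neg_eq_add, sub_neg_eq_add] at this
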